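/- For every positive integer n, R(n) + 3·∑_{k=1}^{n−1} R(k)·R(n−k) = σ(n) − 3·σ₃(n), where σ(n) is the sum of the positive divisors of n, and σ₃(n) = σ(n/3) if 3 divides n and σ₃(n) = 0 otherwise. -/

import Mathlib

/-- The Kronecker symbol `(−3/·)` on positive integers: `χ(r) = 1` if `r ≡ 1 (mod 3)`,
`χ(r) = −1` if `r ≡ 2 (mod 3)`, and `χ(r) = 0` if `3 ∣ r`. -/
def kroneckerNegThree (r : ℕ) : ℤ :=
  if r % 3 = 1 then 1 else if r % 3 = 2 then -1 else 0

/-- `R(n) = ∑_{0<d ∣ n} χ(d)`. -/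
def RR (n : ℕ) : ℤ := ∑ d ∈ n.divisors, kroneckerNegThree d

/-- `σ(n)`, the sum of the positive divisors of `n`. -/
def sigma' (n : ℕ) : ℤ := ∑ d ∈ n.divisors, (d : ℤ)

open Finset

namespace ThetaSqAux

/-- indicator of divisibility by 3 -/
def ind3 (k : ℕ) : ℤ := if k % 3 = 0 then 1 else 0

lemma ind3_congr {x y : ℕ} (h : x % 3 = 0 ↔ y % 3 = 0) : ind3 x = ind3 y := by
  unfold ind3
  by_cases hx : x % 3 = 0
  · rw [if_pos hx, if_pos (h.mp hx)]
  · rw [if_neg hx, if_neg (fun hy => hx (h.mpr hy))]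

/-- the set of quadruples ((a,x),(b,y)) of positive naturals with a*x + b*y = n -/
def QF (n : ℕ) : Finset ((ℕ × ℕ) × (ℕ × ℕ)) :=
  ((Finset.range (n+1) ×ˢ Finset.range (n+1)) ×ˢ
    (Finset.range (n+1) ×ˢ Finset.range (n+1))).filter
    (fun q => q.1.1 * q.1.2 + q.2.1 * q.2.2 = n ∧
      0 < q.1.1 ∧ 0 < q.1.2 ∧ 0 < q.2.1 ∧ 0 < q.2.2)

lemma mem_QF {n : ℕ} {q : (ℕ × ℕ) × (ℕ × ℕ)} :
    q ∈ QF n ↔ q.1.1 * q.1.2 + q.2.1 * q.2.2 = n ∧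
      0 < q.1.1 ∧ 0 < q.1.2 ∧ 0 < q.2.1 ∧ 0 < q.2.2 := by
  obtain ⟨⟨a, x⟩, b, y⟩ := q
  simp only [QF, mem_filter, mem_product, mem_range]
  constructor
  · rintro ⟨-, h⟩; exact h
  · rintro ⟨h, h1, h2, h3, h4⟩
    have e1 : a ≤ a * x := Nat.le_mul_of_pos_right a h2
    have e2 : x ≤ a * x := Nat.le_mul_of_pos_left x h1
    have e3 : b ≤ b * y := Nat.le_mul_of_pos_right b h4
    have e4 : y ≤ b * y := Nat.le_mul_of_pos_left y h3
    exact ⟨⟨⟨by omega, by omega⟩, by omega, by omega⟩, h, h1, h2, h3, h4⟩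

/-- Core C : sum over b < a of w(a+2b) equals sum over x < y of w(a). -/
lemma coreC (n : ℕ) :
    ∑ q ∈ (QF n).filter (fun q => q.2.1 < q.1.1), ind3 (q.1.1 + 2 * q.2.1) =
    ∑ q ∈ (QF n).filter (fun q => q.1.2 < q.2.2), ind3 q.1.1 := by
  refine Finset.sum_nbij'
    (fun q => ((q.1.1 - q.2.1, q.1.2), (q.2.1, q.1.2 + q.2.2)))
    (fun q => ((q.1.1 + q.2.1, q.1.2), (q.2.1, q.2.2 - q.1.2))) ?_ ?_ ?_ ?_ ?_
  · rintro ⟨⟨a, x⟩, b, y⟩ hq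
    simp only [mem_filter, mem_QF] at hq ⊢
    obtain ⟨⟨heq, h1, h2, h3, h4⟩, hba⟩ := hq
    have e1 : (a - b) * x = a * x - b * x := Nat.sub_mul a b x
    have e2 : b * (x + y) = b * x + b * y := Nat.mul_add b x y
    have e3 : b * x ≤ a * x := Nat.mul_le_mul_right x (le_of_lt hba)
    refine ⟨⟨by omega, by omega, h2, h3, by omega⟩, by omega⟩
  · rintro ⟨⟨c, m⟩, C, M⟩ hq
    simp only [mem_filter, mem_QF] at hq ⊢
    obtain ⟨⟨heq, h1, h2, h3, h4⟩, hmM⟩ := hq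
    have e1 : (c + C) * m = c * m + C * m := Nat.add_mul c C m
    have e2 : C * (M - m) = C * M - C * m := by
      rw [Nat.mul_comm, Nat.sub_mul, Nat.mul_comm m C, Nat.mul_comm M C]
    have e3 : C * m ≤ C * M := Nat.mul_le_mul_left C (le_of_lt hmM)
    refine ⟨⟨by omega, by omega, h2, h3, by omega⟩, by omega⟩
  · rintro ⟨⟨a, x⟩, b, y⟩ hq
    simp only [mem_filter, mem_QF] at hq
    obtain ⟨⟨heq, h1, h2, h3, h4⟩, hba⟩ := hq
    simp only [Prod.mk.injEq] <;> and_intros <;> first | trivial | omega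
  · rintro ⟨⟨c, m⟩, C, M⟩ hq
    simp only [mem_filter, mem_QF] at hq
    obtain ⟨⟨heq, h1, h2, h3, h4⟩, hmM⟩ := hq
    simp only [Prod.mk.injEq] <;> and_intros <;> first | trivial | omega
  · rintro ⟨⟨a, x⟩, b, y⟩ hq
    simp only [mem_filter, mem_QF] at hq
    obtain ⟨⟨heq, h1, h2, h3, h4⟩, hba⟩ := hq
    dsimp only
    all_goals exact ind3_congr (by omega)

/-- Core D : sum over a < b of w(a+2b) equals sum over x < y of w(a). -/
lemma coreD (n : ℕ) :
    ∑ q ∈ (QF n).filter (fun q => q.1.1 < q.2.1), ind3 (q.1.1 + 2 * q.2.1) =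
    ∑ q ∈ (QF n).filter (fun q => q.1.2 < q.2.2), ind3 q.1.1 := by
  refine Finset.sum_nbij'
    (fun q => ((q.2.1 - q.1.1, q.2.2), (q.1.1, q.1.2 + q.2.2)))
    (fun q => ((q.2.1, q.2.2 - q.1.2), (q.1.1 + q.2.1, q.1.2))) ?_ ?_ ?_ ?_ ?_
  · rintro ⟨⟨a, x⟩, b, y⟩ hq
    simp only [mem_filter, mem_QF] at hq ⊢
    obtain ⟨⟨heq, h1, h2, h3, h4⟩, hab⟩ := hq
    have e1 : (b - a) * y = b * y - a * y := Nat.sub_mul b a y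
    have e2 : a * (x + y) = a * x + a * y := Nat.mul_add a x y
    have e3 : a * y ≤ b * y := Nat.mul_le_mul_right y (le_of_lt hab)
    refine ⟨⟨by omega, by omega, h4, h1, by omega⟩, by omega⟩
  · rintro ⟨⟨c, m⟩, C, M⟩ hq
    simp only [mem_filter, mem_QF] at hq ⊢
    obtain ⟨⟨heq, h1, h2, h3, h4⟩, hmM⟩ := hq
    have e1 : (c + C) * m = c * m + C * m := Nat.add_mul c C m
    have e2 : C * (M - m) = C * M - C * m := by
      rw [Nat.mul_comm, Nat.sub_mul, Nat.mul_comm m C, Nat.mul_comm M C]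
    have e3 : C * m ≤ C * M := Nat.mul_le_mul_left C (le_of_lt hmM)
    refine ⟨⟨by omega, h3, by omega, by omega, h2⟩, by omega⟩
  · rintro ⟨⟨a, x⟩, b, y⟩ hq
    simp only [mem_filter, mem_QF] at hq
    obtain ⟨⟨heq, h1, h2, h3, h4⟩, hab⟩ := hq
    simp only [Prod.mk.injEq] <;> and_intros <;> first | trivial | omega
  · rintro ⟨⟨c, m⟩, C, M⟩ hq
    simp only [mem_filter, mem_QF] at hq
    obtain ⟨⟨heq, h1, h2, h3, h4⟩, hmM⟩ := hq
    simp only [Prod.mk.injEq] <;> and_intros <;> first | trivial | omega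
  · rintro ⟨⟨a, x⟩, b, y⟩ hq
    simp only [mem_filter, mem_QF] at hq
    obtain ⟨⟨heq, h1, h2, h3, h4⟩, hab⟩ := hq
    dsimp only
    all_goals exact ind3_congr (by omega)

/-- Core E : sum over y < x of w(a+b) equals sum over b < a of w(a). -/
lemma coreE (n : ℕ) :
    ∑ q ∈ (QF n).filter (fun q => q.2.2 < q.1.2), ind3 (q.1.1 + q.2.1) =
    ∑ q ∈ (QF n).filter (fun q => q.2.1 < q.1.1), ind3 q.1.1 := by
  refine Finset.sum_nbij'
    (fun q => ((q.1.1 + q.2.1, q.2.2), (q.1.1, q.1.2 - q.2.2)))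
    (fun q => ((q.2.1, q.1.2 + q.2.2), (q.1.1 - q.2.1, q.1.2))) ?_ ?_ ?_ ?_ ?_
  · rintro ⟨⟨a, x⟩, b, y⟩ hq
    simp only [mem_filter, mem_QF] at hq ⊢
    obtain ⟨⟨heq, h1, h2, h3, h4⟩, hyx⟩ := hq
    have e1 : (a + b) * y = a * y + b * y := Nat.add_mul a b y
    have e2 : a * (x - y) = a * x - a * y := by
      rw [Nat.mul_comm, Nat.sub_mul, Nat.mul_comm x a, Nat.mul_comm y a]
    have e3 : a * y ≤ a * x := Nat.mul_le_mul_left a (le_of_lt hyx)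
    refine ⟨⟨by omega, by omega, h4, h1, by omega⟩, by omega⟩
  · rintro ⟨⟨c, m⟩, C, M⟩ hq
    simp only [mem_filter, mem_QF] at hq ⊢
    obtain ⟨⟨heq, h1, h2, h3, h4⟩, hCc⟩ := hq
    have e1 : C * (m + M) = C * m + C * M := Nat.mul_add C m M
    have e2 : (c - C) * m = c * m - C * m := Nat.sub_mul c C m
    have e3 : C * m ≤ c * m := Nat.mul_le_mul_right m (le_of_lt hCc)
    refine ⟨⟨by omega, h3, by omega, by omega, h2⟩, by omega⟩
  · rintro ⟨⟨a, x⟩, b, y⟩ hq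
    simp only [mem_filter, mem_QF] at hq
    obtain ⟨⟨heq, h1, h2, h3, h4⟩, hyx⟩ := hq
    simp only [Prod.mk.injEq] <;> and_intros <;> first | trivial | omega
  · rintro ⟨⟨c, m⟩, C, M⟩ hq
    simp only [mem_filter, mem_QF] at hq
    obtain ⟨⟨heq, h1, h2, h3, h4⟩, hCc⟩ := hq
    simp only [Prod.mk.injEq] <;> and_intros <;> first | trivial | omega
  · rintro ⟨⟨a, x⟩, b, y⟩ hq
    simp only [mem_filter, mem_QF] at hq
    obtain ⟨⟨heq, h1, h2, h3, h4⟩, hyx⟩ := hq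
    dsimp only
    all_goals exact ind3_congr (by omega)

/-- Core F : sum over x < y of w(a+b) equals sum over b < a of w(a). -/
lemma coreF (n : ℕ) :
    ∑ q ∈ (QF n).filter (fun q => q.1.2 < q.2.2), ind3 (q.1.1 + q.2.1) =
    ∑ q ∈ (QF n).filter (fun q => q.2.1 < q.1.1), ind3 q.1.1 := by
  refine Finset.sum_nbij'
    (fun q => ((q.1.1 + q.2.1, q.1.2), (q.2.1, q.2.2 - q.1.2)))
    (fun q => ((q.1.1 - q.2.1, q.1.2), (q.2.1, q.2.2 + q.1.2))) ?_ ?_ ?_ ?_ ?_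
  · rintro ⟨⟨a, x⟩, b, y⟩ hq
    simp only [mem_filter, mem_QF] at hq ⊢
    obtain ⟨⟨heq, h1, h2, h3, h4⟩, hxy⟩ := hq
    have e1 : (a + b) * x = a * x + b * x := Nat.add_mul a b x
    have e2 : b * (y - x) = b * y - b * x := by
      rw [Nat.mul_comm, Nat.sub_mul, Nat.mul_comm y b, Nat.mul_comm x b]
    have e3 : b * x ≤ b * y := Nat.mul_le_mul_left b (le_of_lt hxy)
    refine ⟨⟨by omega, by omega, h2, h3, by omega⟩, by omega⟩
  · rintro ⟨⟨c, m⟩, C, M⟩ hq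
    simp only [mem_filter, mem_QF] at hq ⊢
    obtain ⟨⟨heq, h1, h2, h3, h4⟩, hCc⟩ := hq
    have e1 : (c - C) * m = c * m - C * m := Nat.sub_mul c C m
    have e2 : C * (M + m) = C * M + C * m := Nat.mul_add C M m
    have e3 : C * m ≤ c * m := Nat.mul_le_mul_right m (le_of_lt hCc)
    refine ⟨⟨by omega, by omega, h2, h3, by omega⟩, by omega⟩
  · rintro ⟨⟨a, x⟩, b, y⟩ hq
    simp only [mem_filter, mem_QF] at hq
    obtain ⟨⟨heq, h1, h2, h3, h4⟩, hxy⟩ := hq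
    simp only [Prod.mk.injEq] <;> and_intros <;> first | trivial | omega
  · rintro ⟨⟨c, m⟩, C, M⟩ hq
    simp only [mem_filter, mem_QF] at hq
    obtain ⟨⟨heq, h1, h2, h3, h4⟩, hCc⟩ := hq
    simp only [Prod.mk.injEq] <;> and_intros <;> first | trivial | omega
  · rintro ⟨⟨a, x⟩, b, y⟩ hq
    simp only [mem_filter, mem_QF] at hq
    obtain ⟨⟨heq, h1, h2, h3, h4⟩, hxy⟩ := hq
    dsimp only
    all_goals exact ind3_congr (by omega)

/-- Core G : sum over a < b of w(a) equals sum over y < x of w(a). -/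
lemma coreG (n : ℕ) :
    ∑ q ∈ (QF n).filter (fun q => q.1.1 < q.2.1), ind3 q.1.1 =
    ∑ q ∈ (QF n).filter (fun q => q.2.2 < q.1.2), ind3 q.1.1 := by
  refine Finset.sum_nbij'
    (fun q => ((q.1.1, q.1.2 + q.2.2), (q.2.1 - q.1.1, q.2.2)))
    (fun q => ((q.1.1, q.1.2 - q.2.2), (q.2.1 + q.1.1, q.2.2))) ?_ ?_ ?_ ?_ ?_
  · rintro ⟨⟨a, x⟩, b, y⟩ hq
    simp only [mem_filter, mem_QF] at hq ⊢
    obtain ⟨⟨heq, h1, h2, h3, h4⟩, hab⟩ := hq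
    have e1 : a * (x + y) = a * x + a * y := Nat.mul_add a x y
    have e2 : (b - a) * y = b * y - a * y := Nat.sub_mul b a y
    have e3 : a * y ≤ b * y := Nat.mul_le_mul_right y (le_of_lt hab)
    refine ⟨⟨by omega, h1, by omega, by omega, h4⟩, by omega⟩
  · rintro ⟨⟨c, m⟩, C, M⟩ hq
    simp only [mem_filter, mem_QF] at hq ⊢
    obtain ⟨⟨heq, h1, h2, h3, h4⟩, hMm⟩ := hq
    have e1 : c * (m - M) = c * m - c * M := by
      rw [Nat.mul_comm, Nat.sub_mul, Nat.mul_comm m c, Nat.mul_comm M c]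
    have e2 : (C + c) * M = C * M + c * M := Nat.add_mul C c M
    have e3 : c * M ≤ c * m := Nat.mul_le_mul_left c (le_of_lt hMm)
    refine ⟨⟨by omega, h1, by omega, by omega, h4⟩, by omega⟩
  · rintro ⟨⟨a, x⟩, b, y⟩ hq
    simp only [mem_filter, mem_QF] at hq
    obtain ⟨⟨heq, h1, h2, h3, h4⟩, hab⟩ := hq
    simp only [Prod.mk.injEq] <;> and_intros <;> first | trivial | omega
  · rintro ⟨⟨c, m⟩, C, M⟩ hq
    simp only [mem_filter, mem_QF] at hq
    obtain ⟨⟨heq, h1, h2, h3, h4⟩, hMm⟩ := hq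
    simp only [Prod.mk.injEq] <;> and_intros <;> first | trivial | omega
  · rintro ⟨⟨a, x⟩, b, y⟩ hq
    rfl

lemma pos_pos {a b : ℕ} (h : 0 < a * b) : 0 < a ∧ 0 < b := by
  rcases Nat.eq_zero_or_pos a with rfl | ha
  · simp at h
  rcases Nat.eq_zero_or_pos b with rfl | hb
  · simp at h
  exact ⟨ha, hb⟩

/-- Core A : diagonal a = b. -/
lemma coreA (n : ℕ) (w : (ℕ × ℕ) × (ℕ × ℕ) → ℤ) :
    ∑ q ∈ (QF n).filter (fun q => q.1.1 = q.2.1), w q =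
    ∑ p ∈ n.divisors.sigma (fun d => Finset.Ico 1 (n / d)),
      w ((p.1, p.2), (p.1, n / p.1 - p.2)) := by
  refine Finset.sum_nbij' (fun q => ⟨q.1.1, q.1.2⟩)
    (fun p => ((p.1, p.2), (p.1, n / p.1 - p.2))) ?_ ?_ ?_ ?_ ?_
  · rintro ⟨⟨a, x⟩, b, y⟩ hq
    simp only [mem_filter, mem_QF] at hq
    obtain ⟨⟨heq, h1, h2, h3, h4⟩, hab⟩ := hq
    try dsimp only at hab
    subst hab
    have hd : a ∣ n := ⟨x + y, by rw [← heq, Nat.mul_add]⟩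
    have hax : 0 < a * x := Nat.mul_pos h1 h2
    have hay : 0 < a * y := Nat.mul_pos h1 h4
    have hdiv : n / a = x + y := by
      rw [← heq, ← Nat.mul_add, Nat.mul_div_cancel_left _ h1]
    simp only [Finset.mem_sigma, Nat.mem_divisors, Finset.mem_Ico]
    exact ⟨⟨hd, by omega⟩, h2, by omega⟩
  · rintro ⟨d, m⟩ hp
    simp only [Finset.mem_sigma, Nat.mem_divisors, Finset.mem_Ico] at hp
    obtain ⟨⟨hd, hne⟩, h1m, hmd⟩ := hp
    have hdpos : 0 < d := Nat.pos_of_dvd_of_pos hd (Nat.pos_of_ne_zero hne)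
    have hmul : d * (n / d) = n := Nat.mul_div_cancel' hd
    have heq2 : d * m + d * (n / d - m) = n := by
      rw [← Nat.mul_add, show m + (n / d - m) = n / d by omega, hmul]
    simp only [mem_filter, mem_QF]
    exact ⟨⟨heq2, hdpos, by omega, hdpos, by omega⟩, by trivial⟩
  · rintro ⟨⟨a, x⟩, b, y⟩ hq
    simp only [mem_filter, mem_QF] at hq
    obtain ⟨⟨heq, h1, h2, h3, h4⟩, hab⟩ := hq
    try dsimp only at hab
    subst hab
    have hdiv : n / a = x + y := by
      rw [← heq, ← Nat.mul_add, Nat.mul_div_cancel_left _ h1]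
    simp only [Prod.mk.injEq] <;> and_intros <;> first | trivial | omega
  · rintro ⟨d, m⟩ hp
    rfl
  · rintro ⟨⟨a, x⟩, b, y⟩ hq
    simp only [mem_filter, mem_QF] at hq
    obtain ⟨⟨heq, h1, h2, h3, h4⟩, hab⟩ := hq
    try dsimp only at hab
    subst hab
    have hdiv : n / a = x + y := by
      rw [← heq, ← Nat.mul_add, Nat.mul_div_cancel_left _ h1]
    show w ((a, x), a, y) = w ((a, x), a, n / a - x)
    rw [show n / a - x = y by omega]

/-- Core B : diagonal x = y. -/
lemma coreB (n : ℕ) (w : (ℕ × ℕ) × (ℕ × ℕ) → ℤ) :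
    ∑ q ∈ (QF n).filter (fun q => q.1.2 = q.2.2), w q =
    ∑ p ∈ n.divisors.sigma (fun e => Finset.Ico 1 e),
      w ((p.2, n / p.1), (p.1 - p.2, n / p.1)) := by
  refine Finset.sum_nbij' (fun q => ⟨q.1.1 + q.2.1, q.1.1⟩)
    (fun p => ((p.2, n / p.1), (p.1 - p.2, n / p.1))) ?_ ?_ ?_ ?_ ?_
  · rintro ⟨⟨a, x⟩, b, y⟩ hq
    simp only [mem_filter, mem_QF] at hq
    obtain ⟨⟨heq, h1, h2, h3, h4⟩, hxy⟩ := hq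
    try dsimp only at hxy
    subst hxy
    have heq2 : (a + b) * x = n := by rw [Nat.add_mul]; omega
    have hd : (a + b) ∣ n := ⟨x, heq2.symm⟩
    have hax : 0 < a * x := Nat.mul_pos h1 h2
    simp only [Finset.mem_sigma, Nat.mem_divisors, Finset.mem_Ico]
    exact ⟨⟨hd, by omega⟩, h1, by omega⟩
  · rintro ⟨e, c⟩ hp
    simp only [Finset.mem_sigma, Nat.mem_divisors, Finset.mem_Ico] at hp
    obtain ⟨⟨hd, hne⟩, h1c, hce⟩ := hp
    have hepos : 0 < e := by omega
    have hnpos : 0 < n := Nat.pos_of_ne_zero hne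
    have hdivpos : 0 < n / e := Nat.div_pos (Nat.le_of_dvd hnpos hd) hepos
    have hmul : e * (n / e) = n := Nat.mul_div_cancel' hd
    have heq2 : c * (n / e) + (e - c) * (n / e) = n := by
      rw [← Nat.add_mul, show c + (e - c) = e by omega, hmul]
    simp only [mem_filter, mem_QF]
    exact ⟨⟨heq2, by omega, hdivpos, by omega, hdivpos⟩, by trivial⟩
  · rintro ⟨⟨a, x⟩, b, y⟩ hq
    simp only [mem_filter, mem_QF] at hq
    obtain ⟨⟨heq, h1, h2, h3, h4⟩, hxy⟩ := hq
    try dsimp only at hxy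
    subst hxy
    have heq2 : (a + b) * x = n := by rw [Nat.add_mul]; omega
    have hdiv : n / (a + b) = x := by
      rw [← heq2, Nat.mul_div_cancel_left _ (by omega)]
    simp only [Prod.mk.injEq] <;> and_intros <;> first | trivial | omega
  · rintro ⟨e, c⟩ hp
    simp only [Finset.mem_sigma, Nat.mem_divisors, Finset.mem_Ico] at hp
    obtain ⟨⟨hd, hne⟩, h1c, hce⟩ := hp
    show (⟨c + (e - c), c⟩ : Σ _ : ℕ, ℕ) = ⟨e, c⟩
    rw [show c + (e - c) = e by omega]
  · rintro ⟨⟨a, x⟩, b, y⟩ hq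
    simp only [mem_filter, mem_QF] at hq
    obtain ⟨⟨heq, h1, h2, h3, h4⟩, hxy⟩ := hq
    try dsimp only at hxy
    subst hxy
    have heq2 : (a + b) * x = n := by rw [Nat.add_mul]; omega
    have hdiv : n / (a + b) = x := by
      rw [← heq2, Nat.mul_div_cancel_left _ (by omega)]
    show w ((a, x), b, x) = w ((a, n / (a + b)), a + b - a, n / (a + b))
    rw [hdiv, show a + b - a = b by omega]

/-- three-way split of a sum along comparison of two ℕ-keys -/
lemma sum_split3 {α : Type*} (s : Finset α) (f g : α → ℕ) (w : α → ℤ) :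
    ∑ q ∈ s, w q =
      ∑ q ∈ s.filter (fun q => f q < g q), w q +
      ∑ q ∈ s.filter (fun q => f q = g q), w q +
      ∑ q ∈ s.filter (fun q => g q < f q), w q := by
  classical
  have h1 := Finset.sum_filter_add_sum_filter_not s (fun q => f q < g q) w
  have h2 := Finset.sum_filter_add_sum_filter_not
    (s.filter (fun q => ¬ f q < g q)) (fun q => f q = g q) w
  rw [Finset.filter_filter, Finset.filter_filter] at h2
  have e1 : s.filter (fun q => ¬ f q < g q ∧ f q = g q) = s.filter (fun q => f q = g q) := by
    apply Finset.filter_congr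
    intro q _
    constructor
    · rintro ⟨-, h⟩; exact h
    · intro h; exact ⟨by omega, h⟩
  have e2 : s.filter (fun q => ¬ f q < g q ∧ ¬ f q = g q) = s.filter (fun q => g q < f q) := by
    apply Finset.filter_congr
    intro q _
    constructor
    · rintro ⟨h1, h2⟩; omega
    · intro h; constructor <;> omega
  rw [e1, e2] at h2
  rw [← h1, ← h2]
  ring

lemma splitAB (n : ℕ) (w : (ℕ × ℕ) × (ℕ × ℕ) → ℤ) :
    ∑ q ∈ QF n, w q =
      ∑ q ∈ (QF n).filter (fun q => q.1.1 < q.2.1), w q +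
      ∑ q ∈ (QF n).filter (fun q => q.1.1 = q.2.1), w q +
      ∑ q ∈ (QF n).filter (fun q => q.2.1 < q.1.1), w q :=
  sum_split3 (QF n) (fun q => q.1.1) (fun q => q.2.1) w

lemma splitXY (n : ℕ) (w : (ℕ × ℕ) × (ℕ × ℕ) → ℤ) :
    ∑ q ∈ QF n, w q =
      ∑ q ∈ (QF n).filter (fun q => q.1.2 < q.2.2), w q +
      ∑ q ∈ (QF n).filter (fun q => q.1.2 = q.2.2), w q +
      ∑ q ∈ (QF n).filter (fun q => q.2.2 < q.1.2), w q :=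
  sum_split3 (QF n) (fun q => q.1.2) (fun q => q.2.2) w

lemma chi_mul (a b : ℕ) :
    kroneckerNegThree a * kroneckerNegThree b = ind3 (a + 2 * b) - ind3 (a + b) := by
  unfold kroneckerNegThree ind3
  have ha : a % 3 = 0 ∨ a % 3 = 1 ∨ a % 3 = 2 := by omega
  have hb : b % 3 = 0 ∨ b % 3 = 1 ∨ b % 3 = 2 := by omega
  have e1 : (a + 2 * b) % 3 = (a % 3 + 2 * (b % 3)) % 3 := by omega
  have e2 : (a + b) % 3 = (a % 3 + b % 3) % 3 := by omega
  rcases ha with h | h | h <;> rcases hb with h' | h' | h' <;>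
    rw [e1, e2, h, h'] <;> norm_num

lemma ico_ind3 (e : ℕ) : ∑ c ∈ Finset.Ico 1 e, ind3 c = (((e - 1) / 3 : ℕ) : ℤ) := by
  induction e with
  | zero => simp
  | succ e ih =>
    rcases Nat.eq_zero_or_pos e with rfl | he
    · simp
    rw [Finset.sum_Ico_succ_top he, ih]
    unfold ind3
    by_cases h : e % 3 = 0
    · rw [if_pos h]; push_cast; omega
    · rw [if_neg h]; push_cast; omega

lemma step1 (n : ℕ) :
    ∑ k ∈ Finset.Ico 1 n, RR k * RR (n - k) =
    ∑ q ∈ QF n, kroneckerNegThree q.1.1 * kroneckerNegThree q.2.1 := by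
  have hR : ∀ m : ℕ, RR m = ∑ p ∈ m.divisorsAntidiagonal, kroneckerNegThree p.1 :=
    fun m => (Nat.sum_divisorsAntidiagonal (fun i _ => kroneckerNegThree i)).symm
  calc ∑ k ∈ Finset.Ico 1 n, RR k * RR (n - k)
      = ∑ k ∈ Finset.Ico 1 n, ∑ p ∈ (Nat.divisorsAntidiagonal k) ×ˢ
          (Nat.divisorsAntidiagonal (n - k)),
          kroneckerNegThree p.1.1 * kroneckerNegThree p.2.1 := by
        refine Finset.sum_congr rfl fun k hk => ?_
        rw [hR k, hR (n - k), Finset.sum_mul_sum]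
        rw [← Finset.sum_product']
    _ = ∑ x ∈ (Finset.Ico 1 n).sigma (fun k => (Nat.divisorsAntidiagonal k) ×ˢ
          (Nat.divisorsAntidiagonal (n - k))),
          kroneckerNegThree x.2.1.1 * kroneckerNegThree x.2.2.1 := by
        rw [Finset.sum_sigma]
    _ = ∑ q ∈ QF n, kroneckerNegThree q.1.1 * kroneckerNegThree q.2.1 := by
        refine Finset.sum_nbij' (fun x => x.2) (fun q => ⟨q.1.1 * q.1.2, q⟩) ?_ ?_ ?_ ?_ ?_
        · rintro ⟨k, ⟨⟨a, x⟩, b, y⟩⟩ hx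
          simp only [Finset.mem_sigma, Finset.mem_Ico, Finset.mem_product,
            Nat.mem_divisorsAntidiagonal] at hx
          obtain ⟨⟨hk1, hkn⟩, ⟨hax, -⟩, ⟨hby, -⟩⟩ := hx
          have h1 : 0 < a * x := by omega
          have h2 : 0 < b * y := by omega
          obtain ⟨ha, hx'⟩ := pos_pos h1
          obtain ⟨hb, hy'⟩ := pos_pos h2
          simp only [mem_QF]
          exact ⟨by omega, ha, hx', hb, hy'⟩
        · rintro ⟨⟨a, x⟩, b, y⟩ hq
          simp only [mem_QF] at hq
          obtain ⟨heq, h1, h2, h3, h4⟩ := hq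
          have hax : 0 < a * x := Nat.mul_pos h1 h2
          have hby : 0 < b * y := Nat.mul_pos h3 h4
          simp only [Finset.mem_sigma, Finset.mem_Ico, Finset.mem_product,
            Nat.mem_divisorsAntidiagonal]
          refine ⟨⟨by omega, by omega⟩, ⟨by trivial, by omega⟩, by omega, by omega⟩
        · rintro ⟨k, ⟨⟨a, x⟩, b, y⟩⟩ hx
          simp only [Finset.mem_sigma, Finset.mem_Ico, Finset.mem_product,
            Nat.mem_divisorsAntidiagonal] at hx
          obtain ⟨-, ⟨hax, -⟩, -⟩ := hx
          dsimp only
          rw [hax]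
        · rintro q hq
          rfl
        · rintro x hx
          rfl

/-- transfer a divisor sum weighted by `ind3` to divisors of `n / 3`. -/
lemma filter3 (n : ℕ) (hn : n ≠ 0) (h3 : 3 ∣ n) (g : ℕ → ℤ) :
    ∑ d ∈ n.divisors, ind3 d * g d = ∑ e ∈ (n / 3).divisors, g (3 * e) := by
  have h0 : ∑ d ∈ n.divisors, ind3 d * g d
      = ∑ d ∈ n.divisors.filter (fun d => d % 3 = 0), g d := by
    rw [Finset.sum_filter]
    refine Finset.sum_congr rfl fun d _ => ?_
    unfold ind3
    split_ifs <;> simp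
  rw [h0]
  refine Finset.sum_nbij' (fun d => d / 3) (fun e => 3 * e) ?_ ?_ ?_ ?_ ?_
  · intro d hd
    simp only [Finset.mem_filter, Nat.mem_divisors] at hd
    obtain ⟨⟨hdvd, -⟩, hmod⟩ := hd
    obtain ⟨u, hu⟩ := hdvd
    have hd3 : d = 3 * (d / 3) := by omega
    have hnu : n = 3 * (d / 3 * u) := by rw [hu]; nth_rewrite 1 [hd3]; ring
    simp only [Nat.mem_divisors]
    exact ⟨⟨u, by omega⟩, by omega⟩
  · intro e he
    simp only [Nat.mem_divisors] at he
    obtain ⟨⟨u, hu⟩, -⟩ := he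
    have hnu : n = 3 * (e * u) := by omega
    simp only [Finset.mem_filter, Nat.mem_divisors]
    exact ⟨⟨⟨u, by rw [hnu]; ring⟩, hn⟩, by omega⟩
  · intro d hd
    simp only [Finset.mem_filter, Nat.mem_divisors] at hd
    show 3 * (d / 3) = d
    omega
  · intro e he
    show 3 * e / 3 = e
    omega
  · intro d hd
    simp only [Finset.mem_filter, Nat.mem_divisors] at hd
    rw [show 3 * (d / 3) = d by omega]

lemma diagN1 (n : ℕ) :
    ∑ q ∈ (QF n).filter (fun q => q.1.1 = q.2.1), ind3 (q.1.1 + 2 * q.2.1) =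
    ∑ d ∈ n.divisors, ((n / d - 1 : ℕ) : ℤ) := by
  rw [coreA n (fun q => ind3 (q.1.1 + 2 * q.2.1)), Finset.sum_sigma]
  refine Finset.sum_congr rfl fun d hd => ?_
  have h3 : (d + 2 * d) % 3 = 0 := by omega
  calc ∑ m ∈ Finset.Ico 1 (n / d), ind3 (d + 2 * d)
      = ∑ m ∈ Finset.Ico 1 (n / d), (1 : ℤ) := by
        refine Finset.sum_congr rfl fun m _ => ?_
        unfold ind3
        rw [if_pos h3]
    _ = ((n / d - 1 : ℕ) : ℤ) := by
        rw [Finset.sum_const, Nat.card_Ico, nsmul_eq_mul, mul_one]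

lemma diagS1 (n : ℕ) :
    ∑ q ∈ (QF n).filter (fun q => q.1.1 = q.2.1), ind3 q.1.1 =
    ∑ d ∈ n.divisors, ((n / d - 1 : ℕ) : ℤ) * ind3 d := by
  rw [coreA n (fun q => ind3 q.1.1), Finset.sum_sigma]
  refine Finset.sum_congr rfl fun d hd => ?_
  calc ∑ m ∈ Finset.Ico 1 (n / d), ind3 d
      = (Finset.Ico 1 (n / d)).card • ind3 d := Finset.sum_const _
    _ = ((n / d - 1 : ℕ) : ℤ) * ind3 d := by rw [Nat.card_Ico, nsmul_eq_mul]

lemma diagS0' (n : ℕ) :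
    ∑ q ∈ (QF n).filter (fun q => q.1.2 = q.2.2), ind3 (q.1.1 + q.2.1) =
    ∑ e ∈ n.divisors, ((e - 1 : ℕ) : ℤ) * ind3 e := by
  rw [coreB n (fun q => ind3 (q.1.1 + q.2.1)), Finset.sum_sigma]
  refine Finset.sum_congr rfl fun e he => ?_
  have h1 : ∀ c ∈ Finset.Ico 1 e, ind3 (c + (e - c)) = ind3 e := by
    intro c hc
    rw [Finset.mem_Ico] at hc
    rw [show c + (e - c) = e by omega]
  rw [Finset.sum_congr rfl h1, Finset.sum_const, Nat.card_Ico, nsmul_eq_mul]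

lemma diagS2 (n : ℕ) :
    ∑ q ∈ (QF n).filter (fun q => q.1.2 = q.2.2), ind3 q.1.1 =
    ∑ e ∈ n.divisors, (((e - 1) / 3 : ℕ) : ℤ) := by
  rw [coreB n (fun q => ind3 q.1.1), Finset.sum_sigma]
  exact Finset.sum_congr rfl fun e he => ico_ind3 e

lemma keyterm (d : ℕ) (hd : 0 < d) :
    kroneckerNegThree d + 2 * (d : ℤ) - 3 - 6 * (((d - 1) / 3 : ℕ) : ℤ) - 3 * ind3 d = 0 := by
  unfold kroneckerNegThree ind3
  split_ifs <;> omega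

end ThetaSqAux

theorem theta_square_eisenstein (n : ℕ) (hn : 0 < n) :
    RR n + 3 * ∑ k ∈ Finset.Ico 1 n, RR k * RR (n - k) =
      sigma' n - 3 * (if 3 ∣ n then sigma' (n / 3) else 0) := by
  classical
  open ThetaSqAux in
  have hT : ∑ k ∈ Finset.Ico 1 n, RR k * RR (n - k)
      = (∑ q ∈ QF n, ind3 (q.1.1 + 2 * q.2.1)) - ∑ q ∈ QF n, ind3 (q.1.1 + q.2.1) := by
    rw [step1, ← Finset.sum_sub_distrib]
    exact Finset.sum_congr rfl fun q _ => chi_mul q.1.1 q.2.1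
  have hN1 := splitAB n (fun q => ind3 (q.1.1 + 2 * q.2.1))
  have hN2 := splitXY n (fun q => ind3 (q.1.1 + q.2.1))
  have hPA := splitAB n (fun q => ind3 q.1.1)
  have hPX := splitXY n (fun q => ind3 q.1.1)
  have hC := coreC n
  have hD := coreD n
  have hE := coreE n
  have hF := coreF n
  have hG := coreG n
  have hA1 := diagN1 n
  have hS1 := diagS1 n
  have hS0' := diagS0' n
  have hS2 := diagS2 n
  -- the convolution sum in terms of divisor sums
  have hT2 : ∑ k ∈ Finset.Ico 1 n, RR k * RR (n - k)
      = (∑ d ∈ n.divisors, ((n / d - 1 : ℕ) : ℤ))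
        - (∑ e ∈ n.divisors, ((e - 1 : ℕ) : ℤ) * ind3 e)
        + 2 * (∑ d ∈ n.divisors, ((n / d - 1 : ℕ) : ℤ) * ind3 d)
        - 2 * (∑ e ∈ n.divisors, (((e - 1) / 3 : ℕ) : ℤ)) := by
    linarith [hT, hN1, hN2, hPA, hPX, hC, hD, hE, hF, hG, hA1, hS1, hS0', hS2]
  -- cast conversions
  have conv1 : ∑ d ∈ n.divisors, ((n / d - 1 : ℕ) : ℤ) * ind3 d
      = ∑ d ∈ n.divisors, ind3 d * (((n / d : ℕ) : ℤ) - 1) := by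
    refine Finset.sum_congr rfl fun d hd => ?_
    have hdvd := (Nat.mem_divisors.mp hd).1
    have hpos : 0 < n / d := Nat.div_pos (Nat.le_of_dvd hn hdvd) (Nat.pos_of_mem_divisors hd)
    rw [Nat.cast_sub hpos, Nat.cast_one]
    ring
  have conv2 : ∑ e ∈ n.divisors, ((e - 1 : ℕ) : ℤ) * ind3 e
      = ∑ e ∈ n.divisors, ind3 e * (((e : ℕ) : ℤ) - 1) := by
    refine Finset.sum_congr rfl fun e he => ?_
    have hpos : 0 < e := Nat.pos_of_mem_divisors he
    rw [Nat.cast_sub hpos, Nat.cast_one]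
    ring
  have conv0 : ∑ d ∈ n.divisors, ((n / d - 1 : ℕ) : ℤ)
      = (∑ d ∈ n.divisors, (d : ℤ)) - ∑ d ∈ n.divisors, (1 : ℤ) := by
    have h1 : ∑ d ∈ n.divisors, ((n / d - 1 : ℕ) : ℤ)
        = ∑ d ∈ n.divisors, (((n / d : ℕ) : ℤ) - 1) := by
      refine Finset.sum_congr rfl fun d hd => ?_
      have hdvd := (Nat.mem_divisors.mp hd).1
      have hpos : 0 < n / d := Nat.div_pos (Nat.le_of_dvd hn hdvd) (Nat.pos_of_mem_divisors hd)
      rw [Nat.cast_sub hpos, Nat.cast_one]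
    rw [h1, Nat.sum_div_divisors n (fun d => ((d : ℕ) : ℤ) - 1), Finset.sum_sub_distrib]
  have eqK : (∑ d ∈ n.divisors, kroneckerNegThree d) + 2 * (∑ d ∈ n.divisors, (d : ℤ))
      - 3 * (∑ d ∈ n.divisors, (1 : ℤ)) - 6 * (∑ e ∈ n.divisors, (((e - 1) / 3 : ℕ) : ℤ))
      - 3 * (∑ d ∈ n.divisors, ind3 d) = 0 := by
    have h : ∑ d ∈ n.divisors,
        (kroneckerNegThree d + 2 * (d : ℤ) - 3 - 6 * (((d - 1) / 3 : ℕ) : ℤ) - 3 * ind3 d) = 0 :=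
      Finset.sum_eq_zero (fun d hd => keyterm d (Nat.pos_of_mem_divisors hd))
    rw [← h]
    rw [Finset.mul_sum, Finset.mul_sum, Finset.mul_sum, Finset.mul_sum,
      ← Finset.sum_add_distrib, ← Finset.sum_sub_distrib, ← Finset.sum_sub_distrib,
      ← Finset.sum_sub_distrib]
    refine Finset.sum_congr rfl fun d hd => ?_
    ring
  have conv3 : ∑ d ∈ n.divisors, ind3 d = ∑ d ∈ n.divisors, ind3 d * 1 := by
    refine Finset.sum_congr rfl fun d hd => (mul_one _).symm
  by_cases h3 : 3 ∣ n
  · rw [if_pos h3]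
    have hn3 : n ≠ 0 := by omega
    have f1 := filter3 n hn3 h3 (fun d => ((n / d : ℕ) : ℤ) - 1)
    have f2 := filter3 n hn3 h3 (fun d => ((d : ℕ) : ℤ) - 1)
    have f3 := filter3 n hn3 h3 (fun _ => (1 : ℤ))
    have f1' : ∑ e ∈ (n / 3).divisors, (((n / (3 * e) : ℕ) : ℤ) - 1)
        = ∑ e ∈ (n / 3).divisors, (((n / 3 / e : ℕ) : ℤ) - 1) := by
      refine Finset.sum_congr rfl fun e he => ?_
      rw [Nat.div_div_eq_div_mul]
    have f1'' := Nat.sum_div_divisors (n / 3) (fun e => ((e : ℕ) : ℤ) - 1)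
    have f2' : ∑ e ∈ (n / 3).divisors, (((3 * e : ℕ) : ℤ) - 1)
        = 3 * (∑ e ∈ (n / 3).divisors, (e : ℤ)) - ∑ e ∈ (n / 3).divisors, (1 : ℤ) := by
      have h1 : ∀ e ∈ (n / 3).divisors, ((3 * e : ℕ) : ℤ) - 1 = 3 * (e : ℤ) - 1 := by
        intro e he
        push_cast
        ring
      rw [Finset.sum_congr rfl h1, Finset.sum_sub_distrib, ← Finset.mul_sum]
    have hsub : ∑ e ∈ (n / 3).divisors, (((e : ℕ) : ℤ) - 1)
        = (∑ e ∈ (n / 3).divisors, (e : ℤ)) - ∑ e ∈ (n / 3).divisors, (1 : ℤ) :=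
      Finset.sum_sub_distrib (fun e => ((e : ℕ) : ℤ)) (fun _ => (1 : ℤ))
    simp only [RR, sigma'] at *
    linarith [hT2, conv1, conv2, conv0, eqK, conv3, f1, f2, f3, f1', f1'', f2', hsub]
  · rw [if_neg h3]
    have hz : ∀ d ∈ n.divisors, ind3 d = 0 := by
      intro d hd
      have hdvd := (Nat.mem_divisors.mp hd).1
      have : ¬ (3 ∣ d) := fun hc => h3 (hc.trans hdvd)
      unfold ind3
      rw [if_neg (by omega)]
    have z1 : ∑ d ∈ n.divisors, ind3 d = 0 := Finset.sum_eq_zero hz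
    have z2 : ∑ d ∈ n.divisors, ind3 d * (((n / d : ℕ) : ℤ) - 1) = 0 :=
      Finset.sum_eq_zero fun d hd => by rw [hz d hd, zero_mul]
    have z3 : ∑ e ∈ n.divisors, ind3 e * (((e : ℕ) : ℤ) - 1) = 0 :=
      Finset.sum_eq_zero fun e he => by rw [hz e he, zero_mul]
    simp only [RR, sigma'] at *
    linarith [hT2, conv1, conv2, conv0, eqK, z1, z2, z3]
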